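/- For every non-negative integer n and integer t, ∑_{k=0}^{n} (-1)^{n-k}·C(n+k, n-k)·L_{2k+t} equals L_t if n ≡ 0 (mod 5); equals L_{t+1} if n ≡ 1 (mod 5); equals 0 if n ≡ 2 (mod 5); equals -L_{t+1} if n ≡ 3 (mod 5); and equals -L_t if n ≡ 4 (mod 5). -/

import Mathlib

open Finset Real

/-- Fibonacci numbers extended to integer indices. -/
def fibZ (n : ℤ) : ℤ :=
  if 0 ≤ n then (Nat.fib n.toNat : ℤ)
  else (-1) ^ ((-n).toNat + 1) * (Nat.fib (-n).toNat : ℤ)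

/-- Lucas numbers on natural indices. -/
def lucasNat : ℕ → ℤ
  | 0 => 2
  | 1 => 1
  | n + 2 => lucasNat (n + 1) + lucasNat n

/-- Lucas numbers extended to integer indices. -/
def lucasZ (n : ℤ) : ℤ :=
  if 0 ≤ n then lucasNat n.toNat
  else (-1) ^ (-n).toNat * lucasNat (-n).toNat

noncomputable def gold : ℝ := (1 + Real.sqrt 5) / 2
noncomputable def gold' : ℝ := (1 - Real.sqrt 5) / 2

lemma lucasZ_nat (k : ℕ) : lucasZ (k : ℤ) = lucasNat k := by
  simp [lucasZ]

lemma lucasZ_rec (m : ℤ) : lucasZ (m + 2) = lucasZ (m + 1) + lucasZ m := by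
  match m with
  | (k : ℕ) =>
    have h1 : ((k:ℤ) + 2) = ((k+2 : ℕ) : ℤ) := by push_cast; ring
    have h2 : ((k:ℤ) + 1) = ((k+1 : ℕ) : ℤ) := by push_cast; ring
    rw [h1, h2, lucasZ_nat, lucasZ_nat, lucasZ_nat]
    rfl
  | .negSucc k =>
    match k with
    | 0 => decide
    | 1 => decide
    | (j + 2) =>
      have h1 : (Int.negSucc (j+2)) + 2 = -((j+1 : ℕ) : ℤ) := by
        rw [Int.negSucc_eq]; push_cast; ring
      have h2 : (Int.negSucc (j+2)) + 1 = -((j+2 : ℕ) : ℤ) := by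
        rw [Int.negSucc_eq]; push_cast; ring
      have h3 : (Int.negSucc (j+2)) = -((j+3 : ℕ) : ℤ) := by
        rw [Int.negSucc_eq]; push_cast; ring
      rw [h1, h2, h3]
      rcases j with _ | i
      · decide
      · have hne : ∀ p : ℕ, 0 < p → lucasZ (-(p : ℤ)) = (-1)^p * lucasNat p := by
          intro p hp
          rw [lucasZ, if_neg (by omega)]
          simp
        rw [hne _ (by omega), hne _ (by omega), hne _ (by omega)]
        have : lucasNat (i + 4) = lucasNat (i+3) + lucasNat (i+2) := rfl
        rw [this]
        ring

/-- coefficient, extended by zero -/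
def Acoef (n k : ℕ) : ℤ :=
  if k ≤ n then (-1)^(n-k) * (Nat.choose (n+k) (n-k) : ℤ) else 0

lemma Acoef_rec (n k : ℕ) :
    Acoef (n+2) k = (if k = 0 then 0 else Acoef (n+1) (k-1)) - 2 * Acoef (n+1) k - Acoef n k := by
  rcases k with _ | j
  · simp [Acoef, pow_succ]
    ring
  · simp only [Nat.succ_ne_zero, if_false, Nat.succ_sub_one]
    rcases Nat.lt_or_ge j n with hj | hj
    · -- j + 1 ≤ n
      obtain ⟨d, rfl⟩ : ∃ d, n = j + 1 + d := ⟨n - (j+1), by omega⟩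
      have e1 : Acoef (j+1+d+2) (j+1) = (-1)^(d+2) * (Nat.choose (2*j+2+d+2) (d+2) : ℤ) := by
        rw [Acoef, if_pos (by omega), show j+1+d+2-(j+1) = d+2 by omega,
          show j+1+d+2+(j+1) = 2*j+2+d+2 by omega]
      have e2 : Acoef (j+1+d+1) j = (-1)^(d+2) * (Nat.choose (2*j+1+d+1) (d+2) : ℤ) := by
        rw [Acoef, if_pos (by omega), show j+1+d+1-j = d+2 by omega,
          show j+1+d+1+j = 2*j+1+d+1 by omega]
      have e3 : Acoef (j+1+d+1) (j+1) = (-1)^(d+1) * (Nat.choose (2*j+2+d+1) (d+1) : ℤ) := by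
        rw [Acoef, if_pos (by omega), show j+1+d+1-(j+1) = d+1 by omega,
          show j+1+d+1+(j+1) = 2*j+2+d+1 by omega]
      have e4 : Acoef (j+1+d) (j+1) = (-1)^d * (Nat.choose (2*j+2+d) d : ℤ) := by
        rw [Acoef, if_pos (by omega), show j+1+d-(j+1) = d by omega,
          show j+1+d+(j+1) = 2*j+2+d by omega]
      rw [e1, e2, e3, e4]
      -- binomial identity: C(m+2,d+2) = C(m,d+2) + 2 C(m+1,d+1) - C(m,d), m = 2j+2+d
      set m := 2*j+2+d with hm
      have hm1 : 2*j+1+d+1 = m := by omega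
      have hm2 : 2*j+2+d+1 = m+1 := by omega
      have hm3 : 2*j+2+d+2 = m+2 := by omega
      rw [hm1, hm2, hm3]
      have p1 : Nat.choose (m+2) (d+2) = Nat.choose (m+1) (d+1) + Nat.choose (m+1) (d+2) :=
        Nat.choose_succ_succ _ _
      have p2 : Nat.choose (m+1) (d+2) = Nat.choose m (d+1) + Nat.choose m (d+2) :=
        Nat.choose_succ_succ _ _
      have p3 : Nat.choose (m+1) (d+1) = Nat.choose m d + Nat.choose m (d+1) :=
        Nat.choose_succ_succ _ _
      have hint : (Nat.choose (m+2) (d+2) : ℤ) =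
          Nat.choose m (d+2) + 2 * Nat.choose (m+1) (d+1) - Nat.choose m d := by
        push_cast [p1, p2, p3]; ring
      rw [hint]
      ring
    · rcases Nat.lt_or_ge j (n+2) with hj2 | hj2
      · -- j = n or j = n+1
        rcases Nat.eq_or_lt_of_le hj with h | h
        · -- j = n : k = n+1
          have hjn : j = n := h.symm
          subst hjn
          have e1 : Acoef (j+2) (j+1) = -(2*(j:ℤ)+3) := by
            rw [Acoef, if_pos (by omega), show j + 2 - (j+1) = 1 by omega,
              show j + 2 + (j+1) = 2*j+3 by omega, Nat.choose_one_right]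
            push_cast; ring
          have e2 : Acoef (j+1) j = -(2*(j:ℤ)+1) := by
            rw [Acoef, if_pos (by omega), show j + 1 - j = 1 by omega,
              show j + 1 + j = 2*j+1 by omega, Nat.choose_one_right]
            push_cast; ring
          have e3 : Acoef (j+1) (j+1) = 1 := by
            rw [Acoef, if_pos le_rfl]
            simp
          have e4 : Acoef j (j+1) = 0 := by
            rw [Acoef, if_neg (by omega)]
          rw [e1, e2, e3, e4]
          ring
        · -- j = n+1 : k = n+2
          have hjn : j = n + 1 := by omega
          subst hjn
          have e1 : Acoef (n+2) (n+2) = 1 := by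
            rw [Acoef, if_pos le_rfl]; simp
          have e2 : Acoef (n+1) (n+1) = 1 := by
            rw [Acoef, if_pos le_rfl]; simp
          have e3 : Acoef (n+1) (n+2) = 0 := by
            rw [Acoef, if_neg (by omega)]
          have e4 : Acoef n (n+2) = 0 := by
            rw [Acoef, if_neg (by omega)]
          rw [e1, e2, e3, e4]
          ring
      · -- k = j+1 > n+2
        have e1 : Acoef (n+2) (j+1) = 0 := by rw [Acoef, if_neg (by omega)]
        have e2 : Acoef (n+1) j = 0 := by rw [Acoef, if_neg (by omega)]
        have e3 : Acoef (n+1) (j+1) = 0 := by rw [Acoef, if_neg (by omega)]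
        have e4 : Acoef n (j+1) = 0 := by rw [Acoef, if_neg (by omega)]
        rw [e1, e2, e3, e4]
        ring

def S (n : ℕ) (t : ℤ) : ℤ :=
  ∑ k ∈ Finset.range (n + 1),
    (-1 : ℤ) ^ (n - k) * (Nat.choose (n + k) (n - k) : ℤ) * lucasZ (2 * k + t)

lemma S_eq (n N : ℕ) (hN : n + 1 ≤ N) (t : ℤ) :
    S n t = ∑ k ∈ Finset.range N, Acoef n k * lucasZ (2 * k + t) := by
  rw [S]
  have h1 : (∑ k ∈ Finset.range (n+1),
      (-1 : ℤ) ^ (n - k) * (Nat.choose (n + k) (n - k) : ℤ) * lucasZ (2 * k + t)) =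
      ∑ k ∈ Finset.range (n+1), Acoef n k * lucasZ (2 * k + t) := by
    apply Finset.sum_congr rfl
    intro k hk
    rw [Finset.mem_range] at hk
    rw [Acoef, if_pos (by omega)]
  rw [h1]
  apply Finset.sum_subset (Finset.range_subset_range.2 hN)
  intro k _ hk
  rw [Finset.mem_range, not_lt] at hk
  rw [Acoef, if_neg (by omega), zero_mul]

lemma S_key (n : ℕ) (t : ℤ) :
    S (n+2) t = S (n+1) (t+2) - 2 * S (n+1) t - S n t := by
  rw [S_eq (n+2) (n+3) (by omega) t, S_eq (n+1) (n+3) (by omega) t,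
    S_eq n (n+3) (by omega) t]
  have hshift : S (n+1) (t+2) =
      ∑ k ∈ Finset.range (n+3),
        (if k = 0 then 0 else Acoef (n+1) (k-1)) * lucasZ (2 * k + t) := by
    rw [Finset.sum_range_succ'
      (fun k => (if k = 0 then 0 else Acoef (n+1) (k-1)) * lucasZ (2 * (k:ℤ) + t)) (n+2)]
    norm_num
    rw [S_eq (n+1) (n+2) le_rfl (t+2)]
    apply Finset.sum_congr rfl
    intro k _
    congr 1
    push_cast
    ring_nf
  rw [hshift]
  have h2 : ∀ k ∈ Finset.range (n+3),
      Acoef (n+2) k * lucasZ (2 * k + t) =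
        (if k = 0 then 0 else Acoef (n+1) (k-1)) * lucasZ (2 * k + t)
          - 2 * (Acoef (n+1) k * lucasZ (2 * k + t))
          - Acoef n k * lucasZ (2 * k + t) := by
    intro k _
    rw [Acoef_rec]
    ring
  rw [Finset.sum_congr rfl h2, Finset.sum_sub_distrib, Finset.sum_sub_distrib,
    ← Finset.mul_sum]

def R (n : ℕ) (t : ℤ) : ℤ :=
  if n % 5 = 0 then lucasZ t
  else if n % 5 = 1 then lucasZ (t + 1)
  else if n % 5 = 2 then 0
  else if n % 5 = 3 then -lucasZ (t + 1)
  else -lucasZ t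

lemma R_key (n : ℕ) (t : ℤ) :
    R (n+2) t = R (n+1) (t+2) - 2 * R (n+1) t - R n t := by
  have l1 : lucasZ (t + 2) = lucasZ (t + 1) + lucasZ t := lucasZ_rec t
  have l2 : lucasZ (t + 2 + 1) = lucasZ (t + 2) + lucasZ (t + 1) := by
    have := lucasZ_rec (t+1)
    rw [show t + 1 + 2 = t + 2 + 1 by ring, show t + 1 + 1 = t + 2 by ring] at this
    exact this
  have h5 : n % 5 = 0 ∨ n % 5 = 1 ∨ n % 5 = 2 ∨ n % 5 = 3 ∨ n % 5 = 4 := by omega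
  rcases h5 with h | h | h | h | h <;>
    simp only [R, show (n+2) % 5 = (n % 5 + 2) % 5 by omega,
      show (n+1) % 5 = (n % 5 + 1) % 5 by omega, h] <;>
    norm_num <;> linarith

lemma main_lemma : ∀ n : ℕ, ∀ t : ℤ, S n t = R n t := by
  intro n
  induction n using Nat.twoStepInduction with
  | zero =>
    intro t
    rw [S, R]
    norm_num
  | one =>
    intro t
    rw [S, R]
    rw [Finset.sum_range_succ, Finset.sum_range_one]
    norm_num
    rw [show (2:ℤ) + t = t + 2 by ring]
    linarith [lucasZ_rec t]
  | more m ih1 ih2 =>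
    intro t
    rw [S_key, R_key, ih1, ih2, ih2]

theorem stmt19 (n : ℕ) (t : ℤ) :
    ∑ k ∈ Finset.range (n + 1),
        (-1 : ℤ) ^ (n - k) * (Nat.choose (n + k) (n - k) : ℤ) * lucasZ (2 * k + t) =
      if n % 5 = 0 then lucasZ t
      else if n % 5 = 1 then lucasZ (t + 1)
      else if n % 5 = 2 then 0
      else if n % 5 = 3 then -lucasZ (t + 1)
      else -lucasZ t := by
  have h := main_lemma n t
  rw [S, R] at h
  exact h
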